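/- Let G be a connected chordal graph, let v be the first vertex in an elimination ordering of G, let i ≥ 0 be an integer, and let H be a connected subgraph of G all of whose vertices are at distance greater than i from v. Then the set K of vertices of G at distance exactly i from v having a neighbor in V(H) induces a clique in G. -/

import Mathlib

/-- `L` is an elimination ordering of `G` (witnessing chordality): `L` is an
injective labelling of the vertices, and for each vertex the neighbors preceding
it in the ordering form a clique. -/
def IsElimOrdering {V : Type} (G : SimpleGraph V) (L : V → ℕ) : Prop :=
  Function.Injective L ∧
    ∀ u x y, G.Adj u x → G.Adj u y → L x < L u → L y < L u → x ≠ y → G.Adj x y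

section Aux

variable {V : Type} {G : SimpleGraph V} {L : V → ℕ}

/-- Sandwich a chain between two extra vertices. -/
lemma chain'_sandwich {α : Type*} {R : α → α → Prop} {x y a b : α} {l : List α}
    (h : List.Chain' R l) (hhead : l.head? = some x) (hlast : l.getLast? = some y)
    (hax : R a x) (hyb : R y b) : List.Chain' R (a :: (l ++ [b])) := by
  simp only [List.Chain']
  rw [List.isChain_cons]
  constructor
  · intro z hz
    have hl : l ≠ [] := by rintro rfl; simp at hhead
    rw [List.head?_append_of_ne_nil _ hl, hhead] at hz
    cases hz; exact hax
  · rw [List.isChain_append]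
    refine ⟨h, List.isChain_singleton b, ?_⟩
    intro z hz w hw
    rw [hlast] at hz
    cases Option.mem_some_iff.mp hz
    cases Option.mem_some_iff.mp (by simpa using hw : w ∈ some b)
    exact hyb

/-- Shortcut a walk at an internal vertex of maximal label. -/
lemma shortcut_aux (hL : IsElimOrdering G L) {x₁ x₂ u : V} {l : List V}
    (hch : List.Chain' G.Adj (x₁ :: (l ++ [x₂])))
    (hne : x₁ ≠ x₂) (hx₂ : x₂ ∉ l)
    (hu : u ∈ l) (hmax : ∀ w ∈ x₁ :: (l ++ [x₂]), L w ≤ L u) :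
    ∃ l' : List V, l'.length < l.length ∧ (∀ w ∈ l', w ∈ l) ∧
      List.Chain' G.Adj (x₁ :: (l' ++ [x₂])) := by
  obtain ⟨l₁, l₂, rfl⟩ := List.append_of_mem hu
  have hsplit : x₁ :: ((l₁ ++ u :: l₂) ++ [x₂]) = (x₁ :: l₁) ++ (u :: (l₂ ++ [x₂])) := by
    simp
  simp only [List.Chain'] at hch
  rw [hsplit, List.isChain_append] at hch
  obtain ⟨ch₁, ch₂, hjunc⟩ := hch
  -- p : last vertex before u
  have hA : (x₁ :: l₁) ≠ [] := List.cons_ne_nil _ _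
  set p := (x₁ :: l₁).getLast hA with hp
  have hpu : G.Adj p u := by
    apply hjunc
    · rw [List.getLast?_eq_getLast hA]; exact Option.mem_some_iff.mpr rfl
    · simp
  -- q : first vertex after u
  rw [List.isChain_cons] at ch₂
  obtain ⟨hq', chB⟩ := ch₂
  have hBne : l₂ ++ [x₂] ≠ [] := by simp
  set q := (l₂ ++ [x₂]).head hBne with hq
  have huq : G.Adj u q := by
    apply hq'
    rw [List.head?_eq_head hBne]; exact Option.mem_some_iff.mpr rfl
  -- labels
  have hpmem : p ∈ x₁ :: ((l₁ ++ u :: l₂) ++ [x₂]) := by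
    rcases List.mem_cons.mp (List.getLast_mem hA) with h | h
    · rw [← hp] at h; rw [h]; exact List.mem_cons_self
    · rw [← hp] at h
      refine List.mem_cons_of_mem _ (List.mem_append_left _ ?_)
      exact List.mem_append_left _ h
  have hqmem : q ∈ x₁ :: ((l₁ ++ u :: l₂) ++ [x₂]) := by
    rcases List.mem_append.mp (List.head_mem hBne) with h | h
    · rw [← hq] at h
      refine List.mem_cons_of_mem _ (List.mem_append_left _ ?_)
      exact List.mem_append_right _ (List.mem_cons_of_mem _ h)
    · rw [← hq] at h
      exact List.mem_cons_of_mem _ (List.mem_append_right _ h)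
  have hLp : L p < L u :=
    lt_of_le_of_ne (hmax p hpmem) (fun h => (G.ne_of_adj hpu) (hL.1 h))
  have hLq : L q < L u :=
    lt_of_le_of_ne (hmax q hqmem) (fun h => (G.ne_of_adj huq.symm) (hL.1 h))
  by_cases hpq : p = q
  · -- drop u and q
    have hqne : q ≠ x₂ := by
      intro h
      rcases List.mem_cons.mp (List.getLast_mem hA) with h' | h'
      · rw [← hp] at h'
        exact hne (by rw [← h', hpq, h])
      · rw [← hp] at h'
        refine hx₂ ?_
        rw [← h, ← hpq]
        exact List.mem_append_left _ h' 
    -- hence l₂ nonempty with head q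
    obtain ⟨c, l₂', rfl⟩ : ∃ c l₂', l₂ = c :: l₂' := by
      cases l₂ with
      | nil => exact absurd (by simp [hq]) hqne
      | cons c t => exact ⟨c, t, rfl⟩
    have hqc : q = c := by simp [hq]
    refine ⟨l₁ ++ l₂', ?_, ?_, ?_⟩
    · simp
    · intro w hw
      rw [List.mem_append] at hw
      rcases hw with h | h
      · exact List.mem_append_left _ h
      · exact List.mem_append_right _ (List.mem_cons_of_mem _ (List.mem_cons_of_mem _ h))
    · have heq : x₁ :: ((l₁ ++ l₂') ++ [x₂]) = (x₁ :: l₁) ++ (l₂' ++ [x₂]) := by simp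
      simp only [List.Chain']
      rw [heq, List.isChain_append]
      rw [hqc] at hpq
      refine ⟨ch₁, (List.isChain_cons.mp chB).2, ?_⟩
      intro z hz w hw
      rw [List.getLast?_eq_getLast hA] at hz
      cases Option.mem_some_iff.mp hz
      have hcw := (List.isChain_cons.mp chB).1 w
      rw [← hp, hpq]
      exact hcw hw
  · -- chord p q, drop u
    have hchord : G.Adj p q := hL.2 u p q hpu.symm huq hLp hLq hpq
    refine ⟨l₁ ++ l₂, ?_, ?_, ?_⟩
    · simp
    · intro w hw
      rw [List.mem_append] at hw
      rcases hw with h | h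
      · exact List.mem_append_left _ h
      · exact List.mem_append_right _ (List.mem_cons_of_mem _ h)
    · have : x₁ :: ((l₁ ++ l₂) ++ [x₂]) = (x₁ :: l₁) ++ (l₂ ++ [x₂]) := by simp
      simp only [List.Chain']
      rw [this, List.isChain_append]
      refine ⟨ch₁, chB, ?_⟩
      intro z hz w hw
      rw [List.getLast?_eq_getLast hA] at hz
      cases Option.mem_some_iff.mp hz
      rw [List.head?_eq_head hBne] at hw
      cases Option.mem_some_iff.mp hw
      exact hchord

end Aux

section Key

variable {V : Type} {G : SimpleGraph V} {L : V → ℕ}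

/-- One-apex key lemma: if `a` is adjacent to both endpoints of a walk whose
internal vertices are all non-neighbors of `a` (and distinct from everything),
then the endpoints are adjacent. -/
lemma keyD (hL : IsElimOrdering G L) :
    ∀ (n : ℕ) (l : List V), l.length ≤ n → ∀ a x₁ x₂ : V,
      G.Adj a x₁ → G.Adj a x₂ → x₁ ≠ x₂ →
      (∀ u ∈ l, u ≠ a ∧ ¬ G.Adj a u ∧ u ≠ x₁ ∧ u ≠ x₂) →
      List.Chain' G.Adj (x₁ :: (l ++ [x₂])) → G.Adj x₁ x₂ := by
  intro n
  induction n with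
  | zero =>
    intro l hlen a x₁ x₂ _ _ _ _ hch
    rw [Nat.le_zero, List.length_eq_zero_iff] at hlen
    subst hlen
    simpa [List.Chain', List.isChain_pair] using hch
  | succ n ih =>
    intro l hlen a x₁ x₂ hax₁ hax₂ hne hcond hch
    by_cases hlnil : l = []
    · subst hlnil; simpa [List.Chain', List.isChain_pair] using hch
    have hlstne : (a :: x₁ :: x₂ :: l) ≠ [] := List.cons_ne_nil _ _
    obtain ⟨m, hm⟩ : ∃ m, m ∈ List.argmax L (a :: x₁ :: x₂ :: l) := by
      cases h : List.argmax L (a :: x₁ :: x₂ :: l) with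
      | none => exact absurd (List.argmax_eq_none.mp h) hlstne
      | some m => exact ⟨m, by rw [Option.mem_def]⟩
    have hmax : ∀ w ∈ a :: x₁ :: x₂ :: l, L w ≤ L m := fun w hw => List.le_of_mem_argmax hw hm
    have hlt : ∀ w, w ∈ a :: x₁ :: x₂ :: l → w ≠ m → L w < L m := fun w hw hne' =>
      lt_of_le_of_ne (hmax w hw) (fun h => hne' (hL.1 h))
    have hmmem := List.argmax_mem hm
    rcases List.mem_cons.mp hmmem with rfl | hmmem
    · -- m = a : eliminate at a
      exact hL.2 m x₁ x₂ hax₁ hax₂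
        (hlt x₁ (by simp) (fun h => G.ne_of_adj hax₁ h.symm))
        (hlt x₂ (by simp) (fun h => G.ne_of_adj hax₂ h.symm)) hne
    rcases List.mem_cons.mp hmmem with rfl | hmmem
    · -- m = x₁ : chord a u₁ contradicts non-adjacency
      obtain ⟨u₁, l', rfl⟩ := List.exists_cons_of_ne_nil hlnil
      have hu₁l : u₁ ∈ u₁ :: l' := List.mem_cons_self
      have hx₁u₁ : G.Adj m u₁ := (List.isChain_cons_cons.mp hch).1
      have hadj : G.Adj a u₁ := hL.2 m a u₁ hax₁.symm hx₁u₁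
        (hlt a (by simp) (G.ne_of_adj hax₁))
        (hlt u₁ (by simp) (hcond u₁ hu₁l).2.2.1)
        (fun h => (hcond u₁ hu₁l).1 h.symm)
      exact absurd hadj (hcond u₁ hu₁l).2.1
    rcases List.mem_cons.mp hmmem with rfl | hmmem
    · -- m = x₂ : chord a u_k contradicts non-adjacency
      obtain ⟨l'', uk, hconcat⟩ := (List.eq_nil_or_concat l).resolve_left hlnil
      rw [List.concat_eq_append] at hconcat
      have hukl : uk ∈ l := by rw [hconcat]; exact List.mem_append_right _ (by simp)
      have hukx₂ : G.Adj uk m := by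
        rw [hconcat] at hch
        simp only [List.Chain'] at hch
        have heq : x₁ :: ((l'' ++ [uk]) ++ [m]) = (x₁ :: l'') ++ [uk, m] := by simp
        rw [heq, List.isChain_append] at hch
        exact (List.isChain_cons_cons.mp hch.2.1).1
      have hadj : G.Adj uk a := hL.2 m uk a hukx₂.symm hax₂.symm
        (hlt uk (by simp [hukl]) (hcond uk hukl).2.2.2)
        (hlt a (by simp) (G.ne_of_adj hax₂))
        (hcond uk hukl).1
      exact absurd hadj.symm (hcond uk hukl).2.1
    · -- m internal : shortcut
      have hx₂l : x₂ ∉ l := fun h => (hcond x₂ h).2.2.2 rfl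
      obtain ⟨l₀, hlen₀, hsub, hch₀⟩ := shortcut_aux hL hch hne hx₂l hmmem
        (by
          intro w hw
          rcases List.mem_cons.mp hw with rfl | hw
          · exact hmax w (by simp)
          rcases List.mem_append.mp hw with hw | hw
          · exact hmax w (by simp [hw])
          · simp at hw; subst hw; exact hmax w (by simp))
      exact ih l₀ (by omega) a x₁ x₂ hax₁ hax₂ hne (fun u hu => hcond u (hsub u hu)) hch₀

/-- Two-apex key lemma. -/
lemma keyE (hL : IsElimOrdering G L) :
    ∀ (n : ℕ) (l : List V), l.length ≤ n → ∀ a b x₁ x₂ : V,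
      (a = b ∨ G.Adj a b) → G.Adj a x₁ → G.Adj b x₂ → x₁ ≠ x₂ → x₁ ≠ b → x₂ ≠ a →
      (∀ u ∈ l, u ≠ a ∧ u ≠ b ∧ ¬ G.Adj a u ∧ ¬ G.Adj b u ∧ u ≠ x₁ ∧ u ≠ x₂) →
      List.Chain' G.Adj (x₁ :: (l ++ [x₂])) → G.Adj x₁ x₂ := by
  intro n
  induction n with
  | zero =>
    intro l hlen a b x₁ x₂ _ _ _ _ _ _ _ hch
    rw [Nat.le_zero, List.length_eq_zero_iff] at hlen
    subst hlen
    simpa [List.Chain', List.isChain_pair] using hch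
  | succ n ih =>
    intro l hlen a b x₁ x₂ hab hax₁ hbx₂ hne hx₁b hx₂a hcond hch
    rcases hab with rfl | hab
    · exact keyD hL (n + 1) l hlen a x₁ x₂ hax₁ hbx₂ hne
        (fun u hu => ⟨(hcond u hu).1, (hcond u hu).2.2.1, (hcond u hu).2.2.2.2⟩) hch
    by_cases hlnil : l = []
    · subst hlnil; simpa [List.Chain', List.isChain_pair] using hch
    have hlstne : (a :: b :: x₁ :: x₂ :: l) ≠ [] := List.cons_ne_nil _ _
    obtain ⟨m, hm⟩ : ∃ m, m ∈ List.argmax L (a :: b :: x₁ :: x₂ :: l) := by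
      cases h : List.argmax L (a :: b :: x₁ :: x₂ :: l) with
      | none => exact absurd (List.argmax_eq_none.mp h) hlstne
      | some m => exact ⟨m, by rw [Option.mem_def]⟩
    have hmax : ∀ w ∈ a :: b :: x₁ :: x₂ :: l, L w ≤ L m := fun w hw =>
      List.le_of_mem_argmax hw hm
    have hlt : ∀ w, w ∈ a :: b :: x₁ :: x₂ :: l → w ≠ m → L w < L m := fun w hw hne' =>
      lt_of_le_of_ne (hmax w hw) (fun h => hne' (hL.1 h))
    have hmmem := List.argmax_mem hm
    rcases List.mem_cons.mp hmmem with rfl | hmmem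
    · -- m = a : chord x₁ b, then one apex b
      have hx₁bAdj : G.Adj x₁ b := hL.2 m x₁ b hax₁ hab
        (hlt x₁ (by simp) (fun h => G.ne_of_adj hax₁ h.symm))
        (hlt b (by simp) (fun h => G.ne_of_adj hab h.symm)) hx₁b
      exact keyD hL (n + 1) l hlen b x₁ x₂ hx₁bAdj.symm hbx₂ hne
        (fun u hu => ⟨(hcond u hu).2.1, (hcond u hu).2.2.2.1, (hcond u hu).2.2.2.2⟩) hch
    rcases List.mem_cons.mp hmmem with rfl | hmmem
    · -- m = b : chord x₂ a, then one apex a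
      have hx₂aAdj : G.Adj x₂ a := hL.2 m x₂ a hbx₂ hab.symm
        (hlt x₂ (by simp) (fun h => G.ne_of_adj hbx₂ h.symm))
        (hlt a (by simp) (G.ne_of_adj hab)) hx₂a
      exact keyD hL (n + 1) l hlen a x₁ x₂ hax₁ hx₂aAdj.symm hne
        (fun u hu => ⟨(hcond u hu).1, (hcond u hu).2.2.1, (hcond u hu).2.2.2.2⟩) hch
    rcases List.mem_cons.mp hmmem with rfl | hmmem
    · -- m = x₁ : chord a u₁ contradicts non-adjacency
      obtain ⟨u₁, l', rfl⟩ := List.exists_cons_of_ne_nil hlnil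
      have hu₁l : u₁ ∈ u₁ :: l' := List.mem_cons_self
      have hx₁u₁ : G.Adj m u₁ := (List.isChain_cons_cons.mp hch).1
      have hadj : G.Adj a u₁ := hL.2 m a u₁ hax₁.symm hx₁u₁
        (hlt a (by simp) (G.ne_of_adj hax₁))
        (hlt u₁ (by simp) (hcond u₁ hu₁l).2.2.2.2.1)
        (fun h => (hcond u₁ hu₁l).1 h.symm)
      exact absurd hadj (hcond u₁ hu₁l).2.2.1
    rcases List.mem_cons.mp hmmem with rfl | hmmem
    · -- m = x₂ : chord b u_k contradicts non-adjacency
      obtain ⟨l'', uk, hconcat⟩ := (List.eq_nil_or_concat l).resolve_left hlnil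
      rw [List.concat_eq_append] at hconcat
      have hukl : uk ∈ l := by rw [hconcat]; exact List.mem_append_right _ (by simp)
      have hukx₂ : G.Adj uk m := by
        rw [hconcat] at hch
        simp only [List.Chain'] at hch
        have heq : x₁ :: ((l'' ++ [uk]) ++ [m]) = (x₁ :: l'') ++ [uk, m] := by simp
        rw [heq, List.isChain_append] at hch
        exact (List.isChain_cons_cons.mp hch.2.1).1
      have hadj : G.Adj uk b := hL.2 m uk b hukx₂.symm hbx₂.symm
        (hlt uk (by simp [hukl]) (hcond uk hukl).2.2.2.2.2)
        (hlt b (by simp) (G.ne_of_adj hbx₂))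
        (hcond uk hukl).2.1
      exact absurd hadj.symm (hcond uk hukl).2.2.2.1
    · -- m internal : shortcut
      have hx₂l : x₂ ∉ l := fun h => (hcond x₂ h).2.2.2.2.2 rfl
      obtain ⟨l₀, hlen₀, hsub, hch₀⟩ := shortcut_aux hL hch hne hx₂l hmmem
        (by
          intro w hw
          rcases List.mem_cons.mp hw with rfl | hw
          · exact hmax w (by simp)
          rcases List.mem_append.mp hw with hw | hw
          · exact hmax w (by simp [hw])
          · simp at hw; subst hw; exact hmax w (by simp))
      exact ih l₀ (by omega) a b x₁ x₂ (Or.inr hab) hax₁ hbx₂ hne hx₁b hx₂a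
        (fun u hu => hcond u (hsub u hu)) hch₀

end Key

section Layer

variable {V : Type} {G : SimpleGraph V} {L : V → ℕ}

lemma exists_penultimate (hconn : G.Connected) (v x : V) (n : ℕ)
    (h : G.dist v x = n + 1) : ∃ a, G.Adj a x ∧ G.dist v a = n := by
  obtain ⟨p, hp⟩ := hconn.exists_walk_length_eq_dist x v
  cases p with
  | nil =>
    rw [SimpleGraph.Walk.length_nil] at hp
    rw [SimpleGraph.dist_comm] at h
    omega
  | cons hadj r =>
    rename_i a
    refine ⟨a, hadj.symm, ?_⟩
    have h1 : G.dist v a ≤ n := by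
      have := SimpleGraph.dist_le r
      rw [SimpleGraph.Walk.length_cons] at hp
      rw [SimpleGraph.dist_comm] at h ⊢
      omega
    have h2 : G.dist v x ≤ G.dist v a + G.dist a x := hconn.dist_triangle
    have h3 : G.dist a x = 1 := SimpleGraph.dist_eq_one_iff_adj.mpr hadj.symm
    omega

lemma adj_dist_le (hconn : G.Connected) (v a u : V) (h : G.Adj a u) :
    G.dist v u ≤ G.dist v a + 1 := by
  have h2 : G.dist v u ≤ G.dist v a + G.dist a u := hconn.dist_triangle
  have h3 : G.dist a u = 1 := SimpleGraph.dist_eq_one_iff_adj.mpr h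
  omega

lemma layer_claim (hconn : G.Connected) (hL : IsElimOrdering G L) (v : V) :
    ∀ (i : ℕ) (x₁ x₂ : V) (l : List V), G.dist v x₁ = i → G.dist v x₂ = i →
      (∀ u ∈ l, i < G.dist v u) → List.Chain' G.Adj (x₁ :: (l ++ [x₂])) →
      x₁ = x₂ ∨ G.Adj x₁ x₂ := by
  intro i
  induction i with
  | zero =>
    intro x₁ x₂ l h₁ h₂ _ _
    left
    have e₁ : v = x₁ := hconn.dist_eq_zero_iff.mp h₁
    have e₂ : v = x₂ := hconn.dist_eq_zero_iff.mp h₂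
    rw [← e₁, ← e₂]
  | succ n ih =>
    intro x₁ x₂ l h₁ h₂ hl hch
    by_cases hne : x₁ = x₂
    · exact Or.inl hne
    right
    obtain ⟨a, hax₁, ha⟩ := exists_penultimate hconn v x₁ n h₁
    obtain ⟨b, hbx₂, hb⟩ := exists_penultimate hconn v x₂ n h₂
    -- the extended walk from a to b
    have hch' : List.Chain' G.Adj (a :: ((x₁ :: (l ++ [x₂])) ++ [b])) := by
      refine chain'_sandwich hch ?_ ?_ hax₁ hbx₂.symm
      · rfl
      · show (( x₁ :: l) ++ [x₂]).getLast? = some x₂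
        exact List.getLast?_concat
    have hab : a = b ∨ G.Adj a b := by
      refine ih a b (x₁ :: (l ++ [x₂])) ha hb ?_ hch'
      intro u hu
      rcases List.mem_cons.mp hu with rfl | hu
      · omega
      rcases List.mem_append.mp hu with hu | hu
      · have := hl u hu; omega
      · simp at hu; subst hu; omega
    -- apply the two-apex key lemma
    refine keyE hL l.length l le_rfl a b x₁ x₂ hab hax₁ hbx₂ hne ?_ ?_ ?_ hch
    · intro h; rw [h] at h₁; omega
    · intro h; rw [h] at h₂; omega
    · intro u hu
      have hu2 := hl u hu
      have hua : ¬ G.Adj a u := fun h => by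
        have := adj_dist_le hconn v a u h; omega
      have hub : ¬ G.Adj b u := fun h => by
        have := adj_dist_le hconn v b u h; omega
      refine ⟨fun h => ?_, fun h => ?_, hua, hub, fun h => ?_, fun h => ?_⟩
      · rw [h] at hu2; omega
      · rw [h] at hu2; omega
      · rw [h] at hu2; omega
      · rw [h] at hu2; omega

end Layer

/-- Let `G` be a connected chordal graph, `v` the first vertex of an elimination
ordering of `G`, `i ≥ 0`, and `H` a connected subgraph of `G` (given by its
nonempty vertex set `S`) at distance greater than `i` from `v`.  Then the set of
vertices at distance exactly `i` from `v` with a neighbor in `S` induces a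
clique in `G`. -/
theorem chordal_layer_neighborhood_clique {V : Type} [Fintype V]
    (G : SimpleGraph V) (hconn : G.Connected) (L : V → ℕ)
    (hL : IsElimOrdering G L) (v : V) (hv : ∀ u, u ≠ v → L v < L u)
    (i : ℕ) (S : Set V) (hS : S.Nonempty) (hSconn : (G.induce S).Connected)
    (hfar : ∀ y ∈ S, i < G.dist v y) :
    ∀ x₁ ∈ {x : V | G.dist v x = i ∧ ∃ y ∈ S, G.Adj x y},
      ∀ x₂ ∈ {x : V | G.dist v x = i ∧ ∃ y ∈ S, G.Adj x y},
        x₁ ≠ x₂ → G.Adj x₁ x₂ := by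
  intro x₁ hx₁ x₂ hx₂ hne
  obtain ⟨h₁, y₁, hy₁S, hx₁y₁⟩ := hx₁
  obtain ⟨h₂, y₂, hy₂S, hx₂y₂⟩ := hx₂
  -- a walk inside S from y₁ to y₂
  obtain ⟨w⟩ := hSconn ⟨y₁, hy₁S⟩ ⟨y₂, hy₂S⟩
  let w' : G.Walk y₁ y₂ := w.map (SimpleGraph.Embedding.induce S).toHom
  have hmemS : ∀ u ∈ w'.support, u ∈ S := by
    intro u hu
    replace hu : u ∈ (w.map (SimpleGraph.Embedding.induce S).toHom).support := hu
    rw [SimpleGraph.Walk.support_map] at hu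
    obtain ⟨⟨u', hu'⟩, _, rfl⟩ := List.mem_map.mp hu
    exact hu'
  have hsupne : w'.support ≠ [] := SimpleGraph.Walk.support_ne_nil _
  have hch : List.Chain' G.Adj (x₁ :: (w'.support ++ [x₂])) := by
    refine chain'_sandwich w'.isChain_adj_support ?_ ?_ hx₁y₁ hx₂y₂.symm
    · rw [List.head?_eq_head hsupne]
      simp
    · rw [List.getLast?_eq_getLast hsupne]
      simp
  have := layer_claim hconn hL v i x₁ x₂ w'.support h₁ h₂
    (fun u hu => hfar u (hmemS u hu)) hch
  exact this.resolve_left hne
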